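/- Let k and M be integers with k ≥ 2M, and let G be a finite simple graph with Δ(G) ≤ k such that the square of every proper subgraph of G is list (k+1)-colorable. Suppose G contains a vertex u with 3 ≤ d(u) ≤ M whose neighbourhood consists of distinct vertices v₁, …, v_{d(u)−2}, x, y, where each vᵢ has degree 2 and the neighbour wᵢ of vᵢ other than u satisfies d(wᵢ) ≤ M, and where d(x) + d(y) ≤ k − M + 2. Then the square of G is list (k+1)-colorable. -/

import Mathlib

open SimpleGraph

def SimpleGraph.square {V : Type*} (G : SimpleGraph V) : SimpleGraph V where
  Adj u v := u ≠ v ∧ (G.Adj u v ∨ ∃ w, G.Adj u w ∧ G.Adj w v)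
  symm := ⟨by
    rintro u v ⟨h, hadj | ⟨w, h1, h2⟩⟩
    · exact ⟨Ne.symm h, Or.inl hadj.symm⟩
    · exact ⟨Ne.symm h, Or.inr ⟨w, h2.symm, h1.symm⟩⟩⟩
  loopless := ⟨fun v h => h.1 rfl⟩

/-- `G` is list `k`-colorable. -/
def SimpleGraph.IsListColorable {V : Type*} (G : SimpleGraph V) (k : ℕ) : Prop :=
  ∀ L : V → Finset ℕ, (∀ v, (L v).card = k) →
    ∃ c : V → ℕ, (∀ v, c v ∈ L v) ∧ ∀ u v, G.Adj u v → c u ≠ c v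

noncomputable def deg {V : Type*} (G : SimpleGraph V) (v : V) : ℕ :=
  (G.neighborSet v).ncard

noncomputable def maxDeg {V : Type*} [Fintype V] (G : SimpleGraph V) : ℕ :=
  Finset.univ.sup (deg G)

noncomputable def chi2l {V : Type*} (G : SimpleGraph V) : ℕ :=
  sInf {k | (G.square).IsListColorable k}

def madLT {V : Type*} (G : SimpleGraph V) (m : ℝ) : Prop :=
  ∀ H : G.Subgraph, H.verts.Nonempty →
    2 * (H.edgeSet.ncard : ℝ) < m * (H.verts.ncard : ℝ)


lemma greedy_aux : ∀ (n : ℕ) (A : Fin n → Finset ℕ),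
    (∀ i : Fin n, ∀ s : Finset ℕ, s.card ≤ (i : ℕ) → (A i \ s).Nonempty) →
    ∃ f : Fin n → ℕ, ∀ i, f i ∈ A i ∧ ∀ j, j < i → f i ≠ f j := by
  intro n
  induction n with
  | zero => intro A _; exact ⟨fun i => 0, fun i => i.elim0⟩
  | succ n ih =>
    intro A hA
    obtain ⟨f0, hf0⟩ := ih (fun i => A i.castSucc) (fun i s hs => hA i.castSucc s (by simpa using hs))
    have hs : ((Finset.univ : Finset (Fin n)).image f0).card ≤ ((Fin.last n : Fin (n+1)) : ℕ) := by
      have := Finset.card_image_le (s := (Finset.univ : Finset (Fin n))) (f := f0)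
      simpa using this
    obtain ⟨a, ha⟩ := hA (Fin.last n) _ hs
    rw [Finset.mem_sdiff] at ha
    refine ⟨Fin.lastCases a f0, ?_⟩
    intro i
    refine Fin.lastCases ?_ ?_ i
    · simp only [Fin.lastCases_last]
      refine ⟨ha.1, ?_⟩
      intro j hj
      obtain ⟨j', rfl⟩ := Fin.exists_castSucc_eq.mpr (Fin.ne_last_of_lt hj)
      simp only [Fin.lastCases_castSucc]
      intro hcon
      exact ha.2 (Finset.mem_image.mpr ⟨j', Finset.mem_univ _, hcon.symm⟩)
    · intro i'
      simp only [Fin.lastCases_castSucc]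
      refine ⟨(hf0 i').1, ?_⟩
      intro j hj
      obtain ⟨j', rfl⟩ := Fin.exists_castSucc_eq.mpr (Fin.ne_last_of_lt (hj.trans_le (Fin.le_last _)))
      simp only [Fin.lastCases_castSucc]
      exact (hf0 i').2 j' (by simpa using hj)

theorem statement6 (k M : ℕ) (hkM : 2 * M ≤ k)
    (V : Type) [Fintype V] (G : SimpleGraph V)
    (hΔ : maxDeg G ≤ k)
    (hmin : ∀ H : G.Subgraph, H ≠ ⊤ → ((H.coe).square).IsListColorable (k + 1))
    (u x y : V) (hu3 : 3 ≤ deg G u) (huM : deg G u ≤ M)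
    (v : Fin (deg G u - 2) → V)
    (hvinj : Function.Injective v)
    (hxy : x ≠ y) (hvx : ∀ i, v i ≠ x) (hvy : ∀ i, v i ≠ y)
    (hnbhd : G.neighborSet u = Set.range v ∪ {x, y})
    (hvdeg : ∀ i, deg G (v i) = 2)
    (hw : ∀ i w, G.Adj (v i) w → w ≠ u → deg G w ≤ M)
    (hxyd : deg G x + deg G y + M ≤ k + 2) :
    (G.square).IsListColorable (k + 1) := by
  classical
  intro L hL
  -- translate deg to degree
  have hdeg : ∀ z : V, deg G z = G.degree z := by
    intro z
    simp [deg, SimpleGraph.degree, SimpleGraph.neighborFinset, Set.ncard_eq_toFinset_card']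
  -- basic adjacency facts
  have hadj_ux : G.Adj u x := by
    have : x ∈ G.neighborSet u := by rw [hnbhd]; exact Or.inr (Or.inl rfl)
    exact this
  have hadj_uy : G.Adj u y := by
    have : y ∈ G.neighborSet u := by rw [hnbhd]; exact Or.inr (Or.inr rfl)
    exact this
  have hadj_uv : ∀ i, G.Adj u (v i) := by
    intro i
    have : v i ∈ G.neighborSet u := by rw [hnbhd]; exact Or.inl ⟨i, rfl⟩
    exact this
  have hune : ∀ i, u ≠ v i := fun i => (hadj_uv i).ne
  have hMn : 3 ≤ M := le_trans hu3 huM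
  have hn0 : 0 < deg G u - 2 := by omega
  set i0 : Fin (deg G u - 2) := ⟨0, hn0⟩ with hi0
  set v0 : V := v i0 with hv0
  -- the subgraph
  set H : G.Subgraph := (⊤ : G.Subgraph).induce {z | z ≠ v0} with hH
  have hHne : H ≠ ⊤ := by
    intro hcon
    have : v0 ∈ H.verts := by rw [hcon]; exact Set.mem_univ _
    exact this rfl
  obtain ⟨c', hc'mem, hc'prop⟩ := hmin H hHne (fun z => L z.1) (fun z => hL z.1)
  set c₀ : V → ℕ := fun z => if h : z ≠ v0 then c' ⟨z, h⟩ else 0 with hc₀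
  have hc₀mem : ∀ z (h : z ≠ v0), c₀ z ∈ L z := by
    intro z h
    simp only [hc₀, dif_pos h]
    exact hc'mem ⟨z, h⟩
  -- cardinality of erased neighbor sets of the v i
  have hE : ∀ i, ((G.neighborFinset (v i)).erase u).card = 1 := by
    intro i
    rw [Finset.card_erase_of_mem (by simp [(hadj_uv i).symm])]
    have : (G.neighborFinset (v i)).card = 2 := by rw [← SimpleGraph.degree, ← hdeg, hvdeg]
    omega
  have hdx1 : 1 ≤ deg G x := by
    rw [hdeg]
    exact Finset.card_pos.mpr ⟨u, by simp [hadj_ux.symm]⟩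
  have hdy1 : 1 ≤ deg G y := by
    rw [hdeg]
    exact Finset.card_pos.mpr ⟨u, by simp [hadj_uy.symm]⟩
  -- forbidden vertex set for u
  set Tu : Finset V := ({x, y} : Finset V) ∪ Finset.univ.biUnion (fun i => (G.neighborFinset (v i)).erase u)
      ∪ (G.neighborFinset x).erase u ∪ (G.neighborFinset y).erase u with hTudef
  have hTuk : Tu.card ≤ k := by
    have h1 : ({x, y} : Finset V).card ≤ 2 := Finset.card_insert_le _ _ |>.trans (by simp)
    have h2 : (Finset.univ.biUnion fun i => (G.neighborFinset (v i)).erase u).card ≤ deg G u - 2 := by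
      refine Finset.card_biUnion_le.trans ?_
      simp [hE]
    have h3 : ((G.neighborFinset x).erase u).card = deg G x - 1 := by
      rw [Finset.card_erase_of_mem (by simp [hadj_ux.symm]), ← SimpleGraph.degree, ← hdeg]
    have h4 : ((G.neighborFinset y).erase u).card = deg G y - 1 := by
      rw [Finset.card_erase_of_mem (by simp [hadj_uy.symm]), ← SimpleGraph.degree, ← hdeg]
    have := Finset.card_union_le (({x, y} : Finset V) ∪ Finset.univ.biUnion
        (fun i => (G.neighborFinset (v i)).erase u) ∪ (G.neighborFinset x).erase u) ((G.neighborFinset y).erase u)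
    have h5 := Finset.card_union_le (({x, y} : Finset V) ∪ Finset.univ.biUnion
        (fun i => (G.neighborFinset (v i)).erase u)) ((G.neighborFinset x).erase u)
    have h6 := Finset.card_union_le ({x, y} : Finset V) (Finset.univ.biUnion
        (fun i => (G.neighborFinset (v i)).erase u))
    rw [hTudef]
    omega
  -- choose the color of u
  have hcu_ex : (L u \ Tu.image c₀).Nonempty := by
    by_contra hne
    rw [Finset.not_nonempty_iff_eq_empty, Finset.sdiff_eq_empty_iff_subset] at hne
    have h1 := Finset.card_le_card hne
    have h2 : (Tu.image c₀).card ≤ Tu.card := Finset.card_image_le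
    have h3 := hL u
    omega
  obtain ⟨cu, hcu⟩ := hcu_ex
  rw [Finset.mem_sdiff] at hcu
  -- forbidden vertex sets for the v i
  set Tb : Fin (deg G u - 2) → Finset V := fun i =>
    ({x, y} : Finset V) ∪ (G.neighborFinset (v i)).erase u ∪
      ((G.neighborFinset (v i)).erase u).biUnion (fun w => (G.neighborFinset w).erase (v i)) with hTbdef
  have hTbcard : ∀ i, (Tb i).card ≤ M + 2 := by
    intro i
    have h1 : ({x, y} : Finset V).card ≤ 2 := Finset.card_insert_le _ _ |>.trans (by simp)
    have h2 := hE i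
    have h3 : (((G.neighborFinset (v i)).erase u).biUnion fun w => (G.neighborFinset w).erase (v i)).card ≤ M - 1 := by
      refine Finset.card_biUnion_le.trans ?_
      have hb : ∀ w ∈ (G.neighborFinset (v i)).erase u, ((G.neighborFinset w).erase (v i)).card ≤ M - 1 := by
        intro w hwmem
        obtain ⟨hwne, hwadj⟩ := Finset.mem_erase.mp hwmem
        have hadj : G.Adj (v i) w := (SimpleGraph.mem_neighborFinset _ _ _).mp hwadj
        have hdw : deg G w ≤ M := hw i w hadj hwne
        have he : ((G.neighborFinset w).erase (v i)).card = G.degree w - 1 :=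
          Finset.card_erase_of_mem (by simp [hadj.symm])
        rw [he, ← hdeg]
        omega
      refine (Finset.sum_le_sum hb).trans ?_
      rw [Finset.sum_const, h2]
      simp
    have h4 := Finset.card_union_le (({x, y} : Finset V) ∪ (G.neighborFinset (v i)).erase u)
        (((G.neighborFinset (v i)).erase u).biUnion fun w => (G.neighborFinset w).erase (v i))
    have h5 := Finset.card_union_le ({x, y} : Finset V) ((G.neighborFinset (v i)).erase u)
    simp only [hTbdef]
    omega
  -- greedy coloring of the v i
  obtain ⟨f, hf⟩ := greedy_aux (deg G u - 2)
      (fun i => L (v i) \ insert cu ((Tb i).image c₀)) (by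
    intro i s hs
    by_contra hne
    rw [Finset.not_nonempty_iff_eq_empty, Finset.sdiff_eq_empty_iff_subset] at hne
    have hsub : L (v i) ⊆ insert cu ((Tb i).image c₀) ∪ s := by
      intro z hz
      by_cases hz2 : z ∈ insert cu ((Tb i).image c₀)
      · exact Finset.mem_union_left _ hz2
      · exact Finset.mem_union_right _ (hne (Finset.mem_sdiff.mpr ⟨hz, hz2⟩))
    have h1 := Finset.card_le_card hsub
    have h2 := Finset.card_union_le (insert cu ((Tb i).image c₀)) s
    have h3 := Finset.card_insert_le cu ((Tb i).image c₀)
    have h4 : ((Tb i).image c₀).card ≤ M + 2 := Finset.card_image_le.trans (hTbcard i)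
    have h5 := hL (v i)
    have h6 : (i : ℕ) < deg G u - 2 := i.2
    omega)
  -- the final coloring
  set c : V → ℕ := fun z => if z = u then cu else if h : ∃ i, z = v i then f h.choose else c₀ z with hc
  have hcv : ∀ i, c (v i) = f i := by
    intro i
    have h1 : ¬ (v i = u) := fun h => hune i h.symm
    have hex : ∃ j, v i = v j := ⟨i, rfl⟩
    simp only [hc, if_neg h1, dif_pos hex]
    exact congrArg f (hvinj hex.choose_spec).symm
  have hcu' : c u = cu := by simp [hc]
  have hcout : ∀ z, z ≠ u → (∀ i, z ≠ v i) → c z = c₀ z := by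
    intro z h1 h2
    simp only [hc, if_neg h1]
    rw [dif_neg]
    rintro ⟨i, hi⟩
    exact h2 i hi
  -- property of f
  have hfmem : ∀ i, f i ∈ L (v i) ∧ f i ∉ insert cu ((Tb i).image c₀) := by
    intro i
    exact Finset.mem_sdiff.mp (hf i).1
  -- helper: square-neighbors of u outside S are in Tu
  have helperU : ∀ b, (G.square).Adj u b → b ≠ u → (∀ i, b ≠ v i) → b ∈ Tu := by
    intro b hab hbu hbv
    obtain ⟨hne, hcase⟩ := hab
    have hmemTu : ∀ {z : V}, z ∈ ({x, y} : Finset V) ∪ Finset.univ.biUnion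
        (fun i => (G.neighborFinset (v i)).erase u) ∪ (G.neighborFinset x).erase u
        ∪ (G.neighborFinset y).erase u → z ∈ Tu := fun h => by rwa [hTudef]
    rcases hcase with h | ⟨z, h1, h2⟩
    · have hb : b ∈ G.neighborSet u := h
      rw [hnbhd] at hb
      rcases hb with ⟨i, hi⟩ | hb'
      · exact absurd hi.symm (hbv i)
      · apply hmemTu
        rw [Set.mem_insert_iff, Set.mem_singleton_iff] at hb'
        rcases hb' with rfl | rfl
        · exact Finset.mem_union_left _ (Finset.mem_union_left _ (Finset.mem_union_left _ (by simp)))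
        · exact Finset.mem_union_left _ (Finset.mem_union_left _ (Finset.mem_union_left _ (by simp)))
    · have hz : z ∈ G.neighborSet u := h1
      rw [hnbhd] at hz
      rcases hz with ⟨i, hi⟩ | hz'
      · apply hmemTu
        refine Finset.mem_union_left _ (Finset.mem_union_left _ (Finset.mem_union_right _ ?_))
        refine Finset.mem_biUnion.mpr ⟨i, Finset.mem_univ _, ?_⟩
        refine Finset.mem_erase.mpr ⟨hbu, ?_⟩
        rw [SimpleGraph.mem_neighborFinset]
        rw [← hi] at h2
        exact h2
      · rw [Set.mem_insert_iff, Set.mem_singleton_iff] at hz'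
        rcases hz' with h | h
        · apply hmemTu
          refine Finset.mem_union_left _ (Finset.mem_union_right _ ?_)
          refine Finset.mem_erase.mpr ⟨hbu, ?_⟩
          rw [SimpleGraph.mem_neighborFinset, ← h]
          exact h2
        · apply hmemTu
          refine Finset.mem_union_right _ ?_
          refine Finset.mem_erase.mpr ⟨hbu, ?_⟩
          rw [SimpleGraph.mem_neighborFinset, ← h]
          exact h2
  -- helper: square-neighbors of v i outside S are in Tb i
  have helperV : ∀ i b, (G.square).Adj (v i) b → b ≠ u → (∀ j, b ≠ v j) → b ∈ Tb i := by
    intro i b hab hbu hbv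
    obtain ⟨hne, hcase⟩ := hab
    have hmemTb : ∀ {z : V}, z ∈ ({x, y} : Finset V) ∪ (G.neighborFinset (v i)).erase u ∪
        ((G.neighborFinset (v i)).erase u).biUnion (fun w => (G.neighborFinset w).erase (v i))
        → z ∈ Tb i := fun h => by rwa [hTbdef]
    rcases hcase with h | ⟨z, h1, h2⟩
    · apply hmemTb
      refine Finset.mem_union_left _ (Finset.mem_union_right _ ?_)
      exact Finset.mem_erase.mpr ⟨hbu, by rwa [SimpleGraph.mem_neighborFinset]⟩
    · by_cases hz : z = u
      · rw [hz] at h2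
        have hb : b ∈ G.neighborSet u := h2
        rw [hnbhd] at hb
        rcases hb with ⟨j, hj⟩ | hb'
        · exact absurd hj.symm (hbv j)
        · apply hmemTb
          rw [Set.mem_insert_iff, Set.mem_singleton_iff] at hb'
          rcases hb' with rfl | rfl
          · exact Finset.mem_union_left _ (Finset.mem_union_left _ (by simp))
          · exact Finset.mem_union_left _ (Finset.mem_union_left _ (by simp))
      · apply hmemTb
        refine Finset.mem_union_right _ ?_
        refine Finset.mem_biUnion.mpr ⟨z, Finset.mem_erase.mpr ⟨hz, by rwa [SimpleGraph.mem_neighborFinset]⟩, ?_⟩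
        exact Finset.mem_erase.mpr ⟨hne.symm, by rwa [SimpleGraph.mem_neighborFinset]⟩
  -- helper: coloring is proper outside S
  have helperOut : ∀ a b, (G.square).Adj a b → a ≠ u → b ≠ u →
      ∀ (ha0 : a ≠ v0) (hb0 : b ≠ v0), c₀ a ≠ c₀ b := by
    intro a b hab hau hbu ha0 hb0
    have hsq : (H.coe.square).Adj ⟨a, ha0⟩ ⟨b, hb0⟩ := by
      obtain ⟨hne, hcase⟩ := hab
      refine ⟨fun hcon => hne (congrArg Subtype.val hcon), ?_⟩
      rcases hcase with h | ⟨z, h1, h2⟩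
      · exact Or.inl ⟨ha0, hb0, by simpa using h⟩
      · by_cases hz : z = v0
        · exfalso
          subst hz
          have hmem_a : a ∈ (G.neighborFinset v0).erase u :=
            Finset.mem_erase.mpr ⟨hau, by simp [h1.symm]⟩
          have hmem_b : b ∈ (G.neighborFinset v0).erase u :=
            Finset.mem_erase.mpr ⟨hbu, by simp [h2]⟩
          have hcard : ((G.neighborFinset v0).erase u).card = 1 := hE i0
          have : a = b := by
            have hle : ((G.neighborFinset v0).erase u).card ≤ 1 := le_of_eq hcard
            exact Finset.card_le_one.mp hle a hmem_a b hmem_b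
          exact hne this
        · exact Or.inr ⟨⟨z, hz⟩, ⟨ha0, hz, by simpa using h1⟩, ⟨hz, hb0, by simpa using h2⟩⟩
    have := hc'prop _ _ hsq
    simpa only [hc₀, dif_pos ha0, dif_pos hb0] using this
  -- finish
  refine ⟨c, ?_, ?_⟩
  · intro z
    by_cases h1 : z = u
    · subst h1; rw [hcu']; exact hcu.1
    · by_cases h2 : ∃ i, z = v i
      · obtain ⟨i, rfl⟩ := h2
        rw [hcv i]
        exact (hfmem i).1
      · push_neg at h2
        rw [hcout z h1 h2]
        exact hc₀mem z (h2 i0)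
  · intro a b hab
    by_cases hau : a = u
    · rw [hau] at hab ⊢
      by_cases hbv : ∃ i, b = v i
      · obtain ⟨i, rfl⟩ := hbv
        rw [hcu', hcv i]
        intro hcon
        exact (hfmem i).2 (by rw [← hcon]; exact Finset.mem_insert_self _ _)
      · push_neg at hbv
        have hbu : b ≠ u := fun h => hab.1 h.symm
        rw [hcu', hcout b hbu hbv]
        intro hcon
        exact hcu.2 (Finset.mem_image.mpr ⟨b, helperU b hab hbu hbv, hcon.symm⟩)
    · by_cases hav : ∃ i, a = v i
      · obtain ⟨i, rfl⟩ := hav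
        by_cases hbu : b = u
        · rw [hbu] at hab ⊢
          rw [hcv i, hcu']
          intro hcon
          exact (hfmem i).2 (by rw [hcon]; exact Finset.mem_insert_self _ _)
        · by_cases hbv : ∃ j, b = v j
          · obtain ⟨j, rfl⟩ := hbv
            rw [hcv i, hcv j]
            have hij : i ≠ j := fun h => hab.1 (by rw [h])
            rcases lt_or_gt_of_ne hij with h | h
            · exact ((hf j).2 i h).symm
            · exact (hf i).2 j h
          · push_neg at hbv
            rw [hcv i, hcout b hbu hbv]
            intro hcon
            exact (hfmem i).2 (Finset.mem_insert.mpr (Or.inr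
              (Finset.mem_image.mpr ⟨b, helperV i b hab hbu hbv, hcon.symm⟩)))
      · push_neg at hav
        by_cases hbu : b = u
        · rw [hbu] at hab ⊢
          rw [hcout a hau hav, hcu']
          intro hcon
          exact hcu.2 (Finset.mem_image.mpr ⟨a, helperU a hab.symm hau hav, hcon⟩)
        · by_cases hbv : ∃ j, b = v j
          · obtain ⟨j, rfl⟩ := hbv
            rw [hcout a hau hav, hcv j]
            intro hcon
            exact (hfmem j).2 (Finset.mem_insert.mpr (Or.inr
              (Finset.mem_image.mpr ⟨a, helperV j a hab.symm hau hav, hcon⟩)))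
          · push_neg at hbv
            rw [hcout a hau hav, hcout b hbu hbv]
            exact helperOut a b hab hau hbu (hav i0) (hbv i0)
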